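/- Let V = (ℂⁿ)^{⊕m} with coordinates x'_{i,j} (1 ≤ i ≤ n, 1 ≤ j ≤ m). In the Weyl algebra D(V), define M_{j,k} = Σ_{i=1}^n x'_{i,j} x'_{i,k}, Δ_{j,k} = Σ_{i=1}^n (∂/∂x'_{i,j})(∂/∂x'_{i,k}), and E_{j,k} = Σ_{i=1}^n x'_{i,j} ∂/∂x'_{i,k}. Then the map τ': 𝔰𝔭_{2m} → D(V) sending e_{j,k+m} + e_{k,j+m} ↦ M_{j,k}, -e_{j+m,k} - e_{k+m,j} ↦ Δ_{j,k}, and e_{j,k} - e_{m+k,m+j} ↦ E_{j,k} + (n/2)δ_{j,k} is a Lie algebra homomorphism. -/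

import Mathlib

noncomputable section

open Matrix

attribute [local instance] LieRing.ofAssociativeRing

abbrev WP (n m : ℕ) := MvPolynomial (Fin n × Fin m) ℂ

def xOp {n m : ℕ} (i : Fin n) (j : Fin m) : Module.End ℂ (WP n m) :=
  LinearMap.mulLeft ℂ (MvPolynomial.X (i, j))

def dOp {n m : ℕ} (i : Fin n) (j : Fin m) : Module.End ℂ (WP n m) :=
  (MvPolynomial.pderiv (i, j)).toLinearMap

/-- `M_{j,k} = Σᵢ x'_{i,j} x'_{i,k}`. -/
def Mop (n m : ℕ) (j k : Fin m) : Module.End ℂ (WP n m) :=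
  ∑ i : Fin n, xOp i j * xOp i k

/-- `Δ_{j,k} = Σᵢ (∂/∂x'_{i,j})(∂/∂x'_{i,k})`. -/
def Δop (n m : ℕ) (j k : Fin m) : Module.End ℂ (WP n m) :=
  ∑ i : Fin n, dOp i j * dOp i k

/-- `E_{j,k} = Σᵢ x'_{i,j} ∂/∂x'_{i,k}`. -/
def Eop (n m : ℕ) (j k : Fin m) : Module.End ℂ (WP n m) :=
  ∑ i : Fin n, xOp i j * dOp i k

/-- `𝔰𝔭_{2m}`, realized as block matrices `[[A,B],[C,-Aᵀ]]` with `B`, `C` symmetric, i.e. the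
matrices `X` with `Xᵀ J + J X = 0` for `J = [[0,1],[-1,0]]`. -/
abbrev spLie (m : ℕ) : LieSubalgebra ℂ (Matrix (Fin m ⊕ Fin m) (Fin m ⊕ Fin m) ℂ) :=
  skewAdjointMatricesLieSubalgebra (Matrix.fromBlocks 0 1 (-1) 0)

namespace Stmt4Aux
open MvPolynomial

-- sum over lie
lemma sum_lie' {A : Type*} [Ring A] {κ : Type*} (s : Finset κ) (f : κ → A) (y : A) :
    ⁅(∑ x ∈ s, f x), y⁆ = ∑ x ∈ s, ⁅f x, y⁆ := by
  simp [Ring.lie_def, Finset.sum_mul, Finset.mul_sum, Finset.sum_sub_distrib]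

lemma lie_sum' {A : Type*} [Ring A] {κ : Type*} (s : Finset κ) (f : κ → A) (y : A) :
    ⁅y, (∑ x ∈ s, f x)⁆ = ∑ x ∈ s, ⁅y, f x⁆ := by
  simp [Ring.lie_def, Finset.sum_mul, Finset.mul_sum, Finset.sum_sub_distrib]

lemma smul_lie'' {R M : Type*} [CommRing R] [AddCommGroup M] [Module R M]
    (t : R) (x y : Module.End R M) :
    ⁅t • x, y⁆ = t • ⁅x, y⁆ := by
  refine LinearMap.ext fun v => ?_
  simp [Ring.lie_def, LinearMap.sub_apply, Module.End.mul_apply, LinearMap.smul_apply,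
    _root_.map_smul, smul_sub]

lemma lie_smul'' {R M : Type*} [CommRing R] [AddCommGroup M] [Module R M]
    (t : R) (x y : Module.End R M) :
    ⁅x, t • y⁆ = t • ⁅x, y⁆ := by
  refine LinearMap.ext fun v => ?_
  simp [Ring.lie_def, LinearMap.sub_apply, Module.End.mul_apply, LinearMap.smul_apply,
    _root_.map_smul, smul_sub]

lemma lie_mul_mul {A : Type*} [Ring A] [Algebra ℂ A] {a b c d : A} {α β γ δ' : ℂ}
    (hac : ⁅a,c⁆ = α • (1:A)) (hbc : ⁅b,c⁆ = β • (1:A))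
    (had : ⁅a,d⁆ = γ • (1:A)) (hbd : ⁅b,d⁆ = δ' • (1:A)) :
    ⁅a*b, c*d⁆ = β • (a*d) + α • (b*d) + δ' • (c*a) + γ • (c*b) := by
  rw [Ring.lie_def] at hac hbc had hbd ⊢
  have h1 : b*c = c*b + β•1 := (sub_eq_iff_eq_add'.mp hbc)
  have h2 : a*c = c*a + α•1 := sub_eq_iff_eq_add'.mp hac
  have h3 : b*d = d*b + δ'•1 := sub_eq_iff_eq_add'.mp hbd
  have h4 : a*d = d*a + γ•1 := sub_eq_iff_eq_add'.mp had
  have e1 : a*b*(c*d) = c*a*(b*d) + α • (b*d) + β • (a*d) := by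
    calc a*b*(c*d) = a*(b*c)*d := by noncomm_ring
    _ = a*(c*b)*d + β • (a*d) := by
        rw [h1]; simp [mul_add, add_mul, mul_smul_comm, smul_mul_assoc, mul_assoc]
    _ = (a*c)*(b*d) + β • (a*d) := by noncomm_ring
    _ = c*a*(b*d) + α • (b*d) + β • (a*d) := by
        rw [h2]; simp [mul_add, add_mul, mul_smul_comm, smul_mul_assoc, mul_assoc]
  have e2 : c*d*(a*b) = c*a*(b*d) - δ' • (c*a) - γ • (c*b) := by
    calc c*d*(a*b) = c*(d*a)*b := by noncomm_ring
    _ = c*(a*d)*b - γ • (c*b) := by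
        rw [h4]; simp [mul_add, add_mul, mul_smul_comm, smul_mul_assoc, mul_assoc]
    _ = (c*a)*(d*b) - γ • (c*b) := by noncomm_ring
    _ = c*a*(b*d) - δ' • (c*a) - γ • (c*b) := by
        rw [h3]
        simp only [mul_add, add_mul, mul_smul_comm, smul_mul_assoc, mul_assoc, mul_one]
        abel
  rw [e1, e2]; abel



lemma pderiv_comm' {σ R : Type*} [CommSemiring R] [DecidableEq σ] (a b : σ)
    (f : MvPolynomial σ R) :
    pderiv a (pderiv b f) = pderiv b (pderiv a f) := by
  induction f using MvPolynomial.induction_on with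
  | C c => simp
  | add p q hp hq => simp [hp, hq]
  | mul_X p s hp =>
      simp only [pderiv_mul, map_add, pderiv_X, Pi.single_apply, apply_ite (pderiv a),
        apply_ite (pderiv b), pderiv_one, map_zero, hp, mul_ite, mul_one, mul_zero]
      split_ifs <;> ring

variable {n m : ℕ}

lemma xx_comm (i i' : Fin n) (j j' : Fin m) :
    ⁅(xOp i j : Module.End ℂ (WP n m)), xOp i' j'⁆ = 0 := by
  rw [Ring.lie_def]
  refine LinearMap.ext fun f => ?_
  show MvPolynomial.X (i,j) * (MvPolynomial.X (i',j') * f)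
      - MvPolynomial.X (i',j') * (MvPolynomial.X (i,j) * f) = 0
  ring

lemma dd_comm (i i' : Fin n) (j j' : Fin m) :
    ⁅(dOp i j : Module.End ℂ (WP n m)), dOp i' j'⁆ = 0 := by
  rw [Ring.lie_def]
  refine LinearMap.ext fun f => ?_
  show pderiv (i,j) (pderiv (i',j') f) - pderiv (i',j') (pderiv (i,j) f) = 0
  rw [pderiv_comm']; ring

lemma dx_comm (i i' : Fin n) (j j' : Fin m) :
    ⁅(dOp i j : Module.End ℂ (WP n m)), xOp i' j'⁆
      = (if ((i,j) : Fin n × Fin m) = (i',j') then (1:ℂ) else 0) • 1 := by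
  rw [Ring.lie_def]
  refine LinearMap.ext fun f => ?_
  show pderiv (i,j) (MvPolynomial.X (i',j') * f) - MvPolynomial.X (i',j') * pderiv (i,j) f
      = (if ((i,j) : Fin n × Fin m) = (i',j') then (1:ℂ) else 0) • f
  rw [pderiv_mul, pderiv_X, Pi.single_apply]
  rcases eq_or_ne ((i,j) : Fin n × Fin m) ((i',j') : Fin n × Fin m) with h | h
  · simp [h, eq_comm]
  · simp [h, Ne.symm h]


abbrev ι (m : ℕ) := Sum (Fin m) (Fin m)

def pOp {n : ℕ} (m : ℕ) (i : Fin n) : ι m → Module.End ℂ (WP n m) :=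
  Sum.elim (xOp i) (dOp i)

def Ωm (m : ℕ) : Matrix (ι m) (ι m) ℂ := fromBlocks 0 (-1) 1 0
def Pm (m : ℕ) : Matrix (ι m) (ι m) ℂ := fromBlocks 0 1 1 0
def Dm (m : ℕ) : Matrix (ι m) (ι m) ℂ := fromBlocks 1 0 0 (-1)
def Jm (m : ℕ) : Matrix (ι m) (ι m) ℂ := fromBlocks 0 1 (-1) 0
def Tm {m : ℕ} (ξ : Matrix (ι m) (ι m) ℂ) : Matrix (ι m) (ι m) ℂ := Dm m * ξ * Pm m

lemma pp_comm (i i' : Fin n) (u v : ι m) :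
    ⁅pOp m i u, pOp m i' v⁆ = (if i = i' then Ωm m u v else 0) • 1 := by
  have key : ∀ (a : Fin n) (b : Fin m) (a' : Fin n) (b' : Fin m),
      ((if ((a,b) : Fin n × Fin m) = (a',b') then (1:ℂ) else 0))
        = (if a = a' then (if b = b' then (1:ℂ) else 0) else 0) := by
    intro a b a' b'
    by_cases h1 : a = a' <;> by_cases h2 : b = b' <;> simp [Prod.ext_iff, h1, h2]
  cases u with
  | inl j => cases v with
    | inl k => simp [pOp, Ωm, xx_comm, Matrix.fromBlocks]
    | inr k =>
        rw [show ⁅pOp m i (Sum.inl j), pOp m i' (Sum.inr k)⁆ = -⁅dOp i' k, xOp i j⁆ from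
          (by rw [← lie_skew]; rfl), dx_comm]
        have hΩ : Ωm m (Sum.inl j) (Sum.inr k) = -(if j = k then (1:ℂ) else 0) := by
          simp [Ωm, Matrix.fromBlocks, Matrix.one_apply]
        rw [hΩ]
        by_cases h1 : i = i' <;> by_cases h3 : j = k <;>
          simp [h1, h3, Prod.ext_iff, eq_comm] <;> module
  | inr j => cases v with
    | inl k =>
        have := dx_comm (n := n) (m := m) i i' j k
        rw [show pOp m i (Sum.inr j) = dOp i j from rfl, show pOp m i' (Sum.inl k) = xOp i' k from rfl,
          this, key]
        simp only [Ωm, Matrix.fromBlocks, Sum.elim_inr, Sum.elim_inl, Matrix.of_apply,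
          Matrix.one_apply]
    | inr k => simp [pOp, Ωm, dd_comm, Matrix.fromBlocks]

lemma Ωm_anti (a b : ι m) : Ωm m a b = -Ωm m b a := by
  cases a <;> cases b <;>
    simp [Ωm, Matrix.fromBlocks, Matrix.one_apply, eq_comm]

lemma sum3_rev {M : Type*} [AddCommMonoid M] {κ₁ κ₂ κ₃ : Type*}
    [Fintype κ₁] [Fintype κ₂] [Fintype κ₃] (f : κ₁ → κ₂ → κ₃ → M) :
    ∑ a, ∑ b, ∑ c, f a b c = ∑ c, ∑ b, ∑ a, f a b c := by
  calc ∑ a, ∑ b, ∑ c, f a b c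
      = ∑ a, ∑ c, ∑ b, f a b c := Finset.sum_congr rfl (fun a _ => Finset.sum_comm)
    _ = ∑ c, ∑ a, ∑ b, f a b c := Finset.sum_comm
    _ = ∑ c, ∑ b, ∑ a, f a b c := Finset.sum_congr rfl (fun c _ => Finset.sum_comm)

lemma triple_mul_apply (X Y Z : Matrix (ι m) (ι m) ℂ) (u z : ι m) :
    (X * Y * Z) u z = ∑ w, ∑ v, X u v * Y v w * Z w z := by
  rw [Matrix.mul_apply]
  refine Finset.sum_congr rfl fun w _ => ?_
  rw [Matrix.mul_apply, Finset.sum_mul]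

def Qi {n m : ℕ} (i : Fin n) (S : Matrix (ι m) (ι m) ℂ) : Module.End ℂ (WP n m) :=
  ∑ u, ∑ v, S u v • (pOp m i u * pOp m i v)

def Qm {n m : ℕ} (S : Matrix (ι m) (ι m) ℂ) : Module.End ℂ (WP n m) :=
  ∑ i : Fin n, Qi i S

lemma qq_same (i : Fin n) (u v w z : ι m) :
    ⁅pOp m i u * pOp m i v, pOp m i w * pOp m i z⁆
      = Ωm m v w • (pOp m i u * pOp m i z) + Ωm m u w • (pOp m i v * pOp m i z)
        + Ωm m v z • (pOp m i w * pOp m i u) + Ωm m u z • (pOp m i w * pOp m i v) := by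
  have h : ∀ a b : ι m, ⁅pOp m i a, pOp m i b⁆ = Ωm m a b • 1 := by
    intro a b; rw [pp_comm, if_pos rfl]
  exact lie_mul_mul (h u w) (h v w) (h u z) (h v z)

lemma qq_ne {i i' : Fin n} (h : i ≠ i') (u v w z : ι m) :
    ⁅pOp m i u * pOp m i v, pOp m i' w * pOp m i' z⁆ = 0 := by
  have hp : ∀ a b : ι m, ⁅pOp m i a, pOp m i' b⁆ = (0:ℂ) • 1 := by
    intro a b; rw [pp_comm, if_neg h]
  rw [lie_mul_mul (hp u w) (hp v w) (hp u z) (hp v z)]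
  simp

lemma sumA (i : Fin n) (S S' : Matrix (ι m) (ι m) ℂ) :
    ∑ u, ∑ v, ∑ w, ∑ z, (S u v * S' w z * Ωm m v w) • (pOp m i u * pOp m i z)
      = Qi i (S * Ωm m * S') := by
  rw [Qi]
  refine Finset.sum_congr rfl fun u _ => ?_
  rw [sum3_rev (f := fun v w z => (S u v * S' w z * Ωm m v w) • (pOp m i u * pOp m i z))]
  refine Finset.sum_congr rfl fun z _ => ?_
  rw [triple_mul_apply, Finset.sum_smul]
  refine Finset.sum_congr rfl fun w _ => ?_
  rw [Finset.sum_smul]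
  refine Finset.sum_congr rfl fun v _ => ?_
  congr 1; ring

lemma sumB (i : Fin n) (S S' : Matrix (ι m) (ι m) ℂ) (hS : Sᵀ = S) :
    ∑ u, ∑ v, ∑ w, ∑ z, (S u v * S' w z * Ωm m u w) • (pOp m i v * pOp m i z)
      = Qi i (S * Ωm m * S') := by
  have hSe : ∀ a b : ι m, S a b = S b a := fun a b => by
    have h2 := congrFun (congrFun hS a) b
    rw [Matrix.transpose_apply] at h2
    exact h2.symm
  rw [Qi, Finset.sum_comm]
  refine Finset.sum_congr rfl fun v _ => ?_
  rw [sum3_rev (f := fun u w z => (S u v * S' w z * Ωm m u w) • (pOp m i v * pOp m i z))]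
  refine Finset.sum_congr rfl fun z _ => ?_
  rw [triple_mul_apply, Finset.sum_smul]
  refine Finset.sum_congr rfl fun w _ => ?_
  rw [Finset.sum_smul]
  refine Finset.sum_congr rfl fun u _ => ?_
  rw [hSe v u]
  congr 1; ring

lemma sumC (i : Fin n) (S S' : Matrix (ι m) (ι m) ℂ) (hS : Sᵀ = S) :
    ∑ u, ∑ v, ∑ w, ∑ z, (S u v * S' w z * Ωm m v z) • (pOp m i w * pOp m i u)
      = -Qi i (S' * Ωm m * S) := by
  have hSe : ∀ a b : ι m, S a b = S b a := fun a b => by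
    have h2 := congrFun (congrFun hS a) b
    rw [Matrix.transpose_apply] at h2
    exact h2.symm
  have hneg : -Qi i (S' * Ωm m * S)
      = ∑ w, ∑ u, (-((S' * Ωm m * S) w u)) • (pOp m i w * pOp m i u) := by
    rw [Qi, ← Finset.sum_neg_distrib]
    refine Finset.sum_congr rfl fun w _ => ?_
    rw [← Finset.sum_neg_distrib]
    exact Finset.sum_congr rfl fun u _ => (neg_smul _ _).symm
  rw [hneg]
  calc ∑ u, ∑ v, ∑ w, ∑ z, (S u v * S' w z * Ωm m v z) • (pOp m i w * pOp m i u)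
      = ∑ u, ∑ w, ∑ v, ∑ z, (S u v * S' w z * Ωm m v z) • (pOp m i w * pOp m i u) :=
        Finset.sum_congr rfl (fun u _ => Finset.sum_comm)
    _ = ∑ w, ∑ u, ∑ v, ∑ z, (S u v * S' w z * Ωm m v z) • (pOp m i w * pOp m i u) :=
        Finset.sum_comm
    _ = ∑ w, ∑ u, (-((S' * Ωm m * S) w u)) • (pOp m i w * pOp m i u) := by
        refine Finset.sum_congr rfl fun w _ => Finset.sum_congr rfl fun u _ => ?_
        rw [triple_mul_apply, ← Finset.sum_neg_distrib, Finset.sum_smul]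
        refine Finset.sum_congr rfl fun v _ => ?_
        rw [← Finset.sum_neg_distrib, Finset.sum_smul]
        refine Finset.sum_congr rfl fun z _ => ?_
        rw [hSe v u, Ωm_anti v z]
        congr 1; ring

lemma sumD (i : Fin n) (S S' : Matrix (ι m) (ι m) ℂ) (hS : Sᵀ = S) :
    ∑ u, ∑ v, ∑ w, ∑ z, (S u v * S' w z * Ωm m u z) • (pOp m i w * pOp m i v)
      = -Qi i (S' * Ωm m * S) := by
  have hSe : ∀ a b : ι m, S a b = S b a := fun a b => by
    have h2 := congrFun (congrFun hS a) b
    rw [Matrix.transpose_apply] at h2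
    exact h2.symm
  have hneg : -Qi i (S' * Ωm m * S)
      = ∑ w, ∑ v, (-((S' * Ωm m * S) w v)) • (pOp m i w * pOp m i v) := by
    rw [Qi, ← Finset.sum_neg_distrib]
    refine Finset.sum_congr rfl fun w _ => ?_
    rw [← Finset.sum_neg_distrib]
    exact Finset.sum_congr rfl fun v _ => (neg_smul _ _).symm
  rw [hneg]
  rw [sum3_rev (f := fun u v w => ∑ z, (S u v * S' w z * Ωm m u z) • (pOp m i w * pOp m i v))]
  refine Finset.sum_congr rfl fun w _ => Finset.sum_congr rfl fun v _ => ?_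
  rw [triple_mul_apply, ← Finset.sum_neg_distrib, Finset.sum_smul]
  refine Finset.sum_congr rfl fun u _ => ?_
  rw [← Finset.sum_neg_distrib, Finset.sum_smul]
  refine Finset.sum_congr rfl fun z _ => ?_
  rw [hSe u v, Ωm_anti u z]
  congr 1; ring

lemma Qi_sub (i : Fin n) (M N : Matrix (ι m) (ι m) ℂ) :
    Qi (n := n) i (M - N) = Qi i M - Qi i N := by
  rw [Qi, Qi, Qi, ← Finset.sum_sub_distrib]
  refine Finset.sum_congr rfl fun u _ => ?_
  rw [← Finset.sum_sub_distrib]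
  refine Finset.sum_congr rfl fun v _ => ?_
  rw [Matrix.sub_apply]; exact sub_smul (M u v) (N u v) (pOp m i u * pOp m i v)

lemma Qi_add (i : Fin n) (M N : Matrix (ι m) (ι m) ℂ) :
    Qi (n := n) i (M + N) = Qi i M + Qi i N := by
  rw [Qi, Qi, Qi, ← Finset.sum_add_distrib]
  refine Finset.sum_congr rfl fun u _ => ?_
  rw [← Finset.sum_add_distrib]
  refine Finset.sum_congr rfl fun v _ => ?_
  rw [Matrix.add_apply]; exact add_smul (M u v) (N u v) (pOp m i u * pOp m i v)

lemma Qi_smul (i : Fin n) (c : ℂ) (M : Matrix (ι m) (ι m) ℂ) :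
    Qi (n := n) i (c • M) = c • Qi i M := by
  rw [Qi, Qi, Finset.smul_sum]
  refine Finset.sum_congr rfl fun u _ => ?_
  rw [Finset.smul_sum]
  refine Finset.sum_congr rfl fun v _ => ?_
  rw [Matrix.smul_apply]; rw [smul_eq_mul, ← smul_smul]

lemma Qm_sub (M N : Matrix (ι m) (ι m) ℂ) :
    Qm (n := n) (M - N) = Qm M - Qm N := by
  rw [Qm, Qm, Qm, ← Finset.sum_sub_distrib]
  exact Finset.sum_congr rfl fun i _ => Qi_sub i M N

lemma Qm_add (M N : Matrix (ι m) (ι m) ℂ) :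
    Qm (n := n) (M + N) = Qm M + Qm N := by
  rw [Qm, Qm, Qm, ← Finset.sum_add_distrib]
  exact Finset.sum_congr rfl fun i _ => Qi_add i M N

lemma Qm_smul (c : ℂ) (M : Matrix (ι m) (ι m) ℂ) :
    Qm (n := n) (c • M) = c • Qm M := by
  rw [Qm, Qm, Finset.smul_sum]
  exact Finset.sum_congr rfl fun i _ => Qi_smul i c M

lemma lie_QiQi_expand (i i' : Fin n) (S S' : Matrix (ι m) (ι m) ℂ) :
    ⁅Qi (n := n) i S, Qi i' S'⁆
      = ∑ u, ∑ v, ∑ w, ∑ z,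
          (S u v * S' w z) • ⁅pOp m i u * pOp m i v, pOp m i' w * pOp m i' z⁆ := by
  rw [Qi, Qi, sum_lie']
  refine Finset.sum_congr rfl fun u _ => ?_
  rw [sum_lie']
  refine Finset.sum_congr rfl fun v _ => ?_
  rw [smul_lie'', lie_sum', Finset.smul_sum]
  refine Finset.sum_congr rfl fun w _ => ?_
  rw [lie_sum', Finset.smul_sum]
  refine Finset.sum_congr rfl fun z _ => ?_
  rw [lie_smul'', smul_smul]

lemma lieQi (i i' : Fin n) (S S' : Matrix (ι m) (ι m) ℂ) (hS : Sᵀ = S) (hS' : S'ᵀ = S') :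
    ⁅Qi (n := n) i S, Qi i' S'⁆
      = if i = i' then (2:ℂ) • Qi i (S * Ωm m * S' - S' * Ωm m * S) else 0 := by
  by_cases h : i = i'
  · subst h; rw [if_pos rfl, lie_QiQi_expand]
    calc ∑ u, ∑ v, ∑ w, ∑ z,
            (S u v * S' w z) • ⁅pOp m i u * pOp m i v, pOp m i w * pOp m i z⁆
        = ∑ u, ∑ v, ∑ w, ∑ z,
            ((S u v * S' w z * Ωm m v w) • (pOp m i u * pOp m i z)
              + (S u v * S' w z * Ωm m u w) • (pOp m i v * pOp m i z)
              + (S u v * S' w z * Ωm m v z) • (pOp m i w * pOp m i u)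
              + (S u v * S' w z * Ωm m u z) • (pOp m i w * pOp m i v)) := by
          refine Finset.sum_congr rfl fun u _ => Finset.sum_congr rfl fun v _ =>
            Finset.sum_congr rfl fun w _ => Finset.sum_congr rfl fun z _ => ?_
          rw [qq_same, smul_add, smul_add, smul_add, smul_smul, smul_smul, smul_smul, smul_smul]
      _ = (∑ u, ∑ v, ∑ w, ∑ z, (S u v * S' w z * Ωm m v w) • (pOp m i u * pOp m i z))
          + (∑ u, ∑ v, ∑ w, ∑ z, (S u v * S' w z * Ωm m u w) • (pOp m i v * pOp m i z))
          + (∑ u, ∑ v, ∑ w, ∑ z, (S u v * S' w z * Ωm m v z) • (pOp m i w * pOp m i u))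
          + (∑ u, ∑ v, ∑ w, ∑ z, (S u v * S' w z * Ωm m u z) • (pOp m i w * pOp m i v)) := by
          simp only [Finset.sum_add_distrib]
      _ = Qi i (S * Ωm m * S') + Qi i (S * Ωm m * S')
          + -Qi i (S' * Ωm m * S) + -Qi i (S' * Ωm m * S) := by
          rw [sumA i S S', sumB i S S' hS, sumC i S S' hS, sumD i S S' hS]
      _ = (2:ℂ) • Qi i (S * Ωm m * S' - S' * Ωm m * S) := by
          rw [Qi_sub, two_smul]; abel
  · rw [if_neg h, lie_QiQi_expand]
    have hz : ∀ u v w z : ι m,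
        (S u v * S' w z) • ⁅pOp m i u * pOp m i v, pOp m i' w * pOp m i' z⁆
          = (0 : Module.End ℂ (WP n m)) := by
      intro u v w z
      rw [qq_ne h u v w z, smul_zero]
    simp only [hz, Finset.sum_const_zero]

lemma lieQ (S S' : Matrix (ι m) (ι m) ℂ) (hS : Sᵀ = S) (hS' : S'ᵀ = S') :
    ⁅Qm (n := n) S, Qm (n := n) S'⁆ = (2:ℂ) • Qm (S * Ωm m * S' - S' * Ωm m * S) := by
  have h1 : ⁅Qm (n := n) S, Qm (n := n) S'⁆ = ∑ i : Fin n, ∑ i' : Fin n, ⁅Qi i S, Qi i' S'⁆ := by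
    rw [Qm, Qm, sum_lie']
    exact Finset.sum_congr rfl fun i _ => lie_sum' _ _ _
  rw [h1]
  conv_rhs => rw [Qm, Finset.smul_sum]
  refine Finset.sum_congr rfl fun i _ => ?_
  rw [Finset.sum_congr rfl fun i' _ => lieQi i i' S S' hS hS', Finset.sum_ite_eq]
  simp

lemma negOne_blocks :
    (-1 : Matrix (ι m) (ι m) ℂ) = fromBlocks (-1) 0 0 (-1) := by
  have h1 : (1 : Matrix (ι m) (ι m) ℂ) = fromBlocks 1 0 0 1 := Matrix.fromBlocks_one.symm
  rw [show (-1 : Matrix (ι m) (ι m) ℂ) = -(1 : Matrix (ι m) (ι m) ℂ) from rfl, h1,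
    Matrix.fromBlocks_neg, neg_zero]

lemma hJJ : Jm m * Jm m = (-1 : Matrix (ι m) (ι m) ℂ) := by
  rw [negOne_blocks]
  simp [Jm, Matrix.fromBlocks_multiply]

lemma hPJ : Pm m * Jm m = -(Dm m) := by
  rw [show -(Dm m) = fromBlocks (-1) 0 0 1 from by
    simp [Dm, Matrix.fromBlocks_neg]]
  simp [Pm, Jm, Matrix.fromBlocks_multiply]

lemma hJD : Jm m * Dm m = -(Pm m) := by
  rw [show -(Pm m) = fromBlocks 0 (-1) (-1) 0 from by
    simp [Pm, Matrix.fromBlocks_neg]]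
  simp [Jm, Dm, Matrix.fromBlocks_multiply]

lemma hPΩD : Pm m * Ωm m * Dm m = 1 := by
  rw [show (1 : Matrix (ι m) (ι m) ℂ) = fromBlocks 1 0 0 1 from Matrix.fromBlocks_one.symm]
  simp [Pm, Ωm, Dm, Matrix.fromBlocks_multiply]

lemma hPmT : (Pm m)ᵀ = Pm m := by
  simp [Pm, Matrix.fromBlocks_transpose]

lemma hDmT : (Dm m)ᵀ = Dm m := by
  simp [Dm, Matrix.fromBlocks_transpose]

lemma TΩT (ξ η : Matrix (ι m) (ι m) ℂ) : Tm ξ * Ωm m * Tm η = Tm (ξ * η) := by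
  calc Tm ξ * Ωm m * Tm η = Dm m * (ξ * ((Pm m * (Ωm m * Dm m)) * (η * Pm m))) := by
        simp only [Tm, Matrix.mul_assoc]
    _ = Tm (ξ * η) := by
        rw [← Matrix.mul_assoc (Pm m), hPΩD, Matrix.one_mul]
        simp only [Tm, Matrix.mul_assoc]

lemma Tm_sub (ξ η : Matrix (ι m) (ι m) ℂ) : Tm (ξ - η) = Tm ξ - Tm η := by
  simp [Tm, Matrix.mul_sub, Matrix.sub_mul]

lemma Tm_add (ξ η : Matrix (ι m) (ι m) ℂ) : Tm (ξ + η) = Tm ξ + Tm η := by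
  simp [Tm, Matrix.mul_add, Matrix.add_mul]

lemma Tm_neg (ξ : Matrix (ι m) (ι m) ℂ) : Tm (-ξ) = -Tm ξ := by
  simp [Tm, Matrix.mul_neg, Matrix.neg_mul]

lemma Tm_smul (c : ℂ) (ξ : Matrix (ι m) (ι m) ℂ) : Tm (c • ξ) = c • Tm ξ := by
  simp [Tm, Matrix.mul_smul, Matrix.smul_mul]

lemma T_symm {ξ : Matrix (ι m) (ι m) ℂ} (hξ : ξ ∈ spLie m) : (Tm ξ)ᵀ = Tm ξ := by
  have h0 : ξᵀ * Jm m = Jm m * (-ξ) :=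
    (mem_skewAdjointMatricesSubmodule (Matrix.fromBlocks 0 1 (-1) 0) ξ).mp hξ
  have hξT : ξᵀ = Jm m * (ξ * Jm m) := by
    have h1 := congrArg (fun M => M * Jm m) h0
    simp only [Matrix.mul_assoc, hJJ, Matrix.mul_neg, Matrix.mul_one, Matrix.neg_mul,
      neg_inj] at h1
    exact h1
  have key : Pm m * (ξᵀ * Dm m) = Dm m * (ξ * Pm m) := by
    rw [hξT]
    calc Pm m * (Jm m * (ξ * Jm m) * Dm m)
        = (Pm m * Jm m) * (ξ * (Jm m * Dm m)) := by simp only [Matrix.mul_assoc]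
      _ = (-(Dm m)) * (ξ * (-(Pm m))) := by rw [hPJ, hJD]
      _ = Dm m * (ξ * Pm m) := by simp [Matrix.mul_neg, Matrix.neg_mul]
  rw [Tm, Matrix.transpose_mul, Matrix.transpose_mul, hPmT, hDmT, ← Matrix.mul_assoc,
    Matrix.mul_assoc (Pm m), key]
  simp only [Matrix.mul_assoc]

def sg (u : ι m) : ℂ := Sum.elim (fun _ => 1) (fun _ => -1) u

lemma Dm_mul_apply (X : Matrix (ι m) (ι m) ℂ) (u v : ι m) :
    (Dm m * X) u v = sg u * X u v := by
  cases u with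
  | inl j =>
      simp [Dm, Matrix.mul_apply, Fintype.sum_sum_type, Matrix.fromBlocks,
        Matrix.one_apply, ite_mul, Finset.sum_ite_eq, sg]
  | inr j =>
      simp [Dm, Matrix.mul_apply, Fintype.sum_sum_type, Matrix.fromBlocks,
        Matrix.one_apply, ite_mul, Finset.sum_ite_eq, sg]

lemma mul_Pm_apply (X : Matrix (ι m) (ι m) ℂ) (u v : ι m) :
    (X * Pm m) u v = X u (Sum.swap v) := by
  cases v with
  | inl k =>
      simp [Pm, Matrix.mul_apply, Fintype.sum_sum_type, Matrix.fromBlocks,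
        Matrix.one_apply, mul_ite, Finset.sum_ite_eq', Sum.swap]
  | inr k =>
      simp [Pm, Matrix.mul_apply, Fintype.sum_sum_type, Matrix.fromBlocks,
        Matrix.one_apply, mul_ite, Finset.sum_ite_eq', Sum.swap]

lemma Tm_apply (ξ : Matrix (ι m) (ι m) ℂ) (u v : ι m) :
    Tm ξ u v = sg u * ξ u (Sum.swap v) := by
  rw [Tm, mul_Pm_apply, Dm_mul_apply]

lemma Tm_std (a b : ι m) :
    Tm (Matrix.single a b (1:ℂ)) = sg a • Matrix.single a (Sum.swap b) 1 := by
  ext u v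
  rw [Tm_apply]
  simp only [Matrix.single, Matrix.of_apply, Matrix.smul_apply, smul_eq_mul]
  by_cases h1 : a = u
  · subst h1
    by_cases h2 : b = Sum.swap v
    · have h3 : Sum.swap b = v := by rw [h2, Sum.swap_swap]
      simp [h2, h3]
    · have h3 : ¬ Sum.swap b = v := fun hc => h2 (by rw [← hc, Sum.swap_swap])
      simp [h2, h3]
  · simp [h1]

lemma Qi_std (i : Fin n) (a b : ι m) :
    Qi (n := n) i (Matrix.single a b (1:ℂ)) = pOp m i a * pOp m i b := by
  rw [Qi]
  rw [Finset.sum_eq_single a]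
  · rw [Finset.sum_eq_single b]
    · simp [Matrix.single]
    · intro v _ hv; simp [Matrix.single, Ne.symm hv]
    · intro hmem; exact absurd (Finset.mem_univ b) hmem
  · intro u _ hu
    refine Finset.sum_eq_zero fun v _ => ?_
    simp [Matrix.single, Ne.symm hu]
  · intro hmem; exact absurd (Finset.mem_univ a) hmem

lemma Qm_std (a b : ι m) :
    Qm (n := n) (Matrix.single a b (1:ℂ)) = ∑ i : Fin n, pOp m i a * pOp m i b := by
  rw [Qm]
  exact Finset.sum_congr rfl fun i _ => Qi_std i a b

lemma xops_comm (i : Fin n) (j k : Fin m) : xOp i j * xOp i k = xOp i k * xOp i j := by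
  have h := xx_comm (n := n) (m := m) i i j k
  rw [Ring.lie_def] at h
  exact sub_eq_zero.mp h

lemma dops_comm (i : Fin n) (j k : Fin m) : dOp i j * dOp i k = dOp i k * dOp i j := by
  have h := dd_comm (n := n) (m := m) i i j k
  rw [Ring.lie_def] at h
  exact sub_eq_zero.mp h

lemma dx_rel (i : Fin n) (j k : Fin m) :
    dOp i k * xOp i j = xOp i j * dOp i k + (if j = k then (1:ℂ) else 0) • 1 := by
  have h := dx_comm (n := n) (m := m) i i k j
  rw [Ring.lie_def] at h
  have h2 : (if ((i,k) : Fin n × Fin m) = (i,j) then (1:ℂ) else 0)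
      = (if j = k then (1:ℂ) else 0) := by
    by_cases hjk : j = k <;> simp [Prod.ext_iff, hjk, eq_comm]
  rw [h2] at h
  exact sub_eq_iff_eq_add'.mp h

def tauLin (n m : ℕ) : spLie m →ₗ[ℂ] Module.End ℂ (WP n m) where
  toFun ξ := (2⁻¹ : ℂ) • Qm (Tm (ξ : Matrix (ι m) (ι m) ℂ))
  map_add' x y := by
    have hc : ((x + y : spLie m) : Matrix (ι m) (ι m) ℂ)
        = (x : Matrix (ι m) (ι m) ℂ) + (y : Matrix (ι m) (ι m) ℂ) := rfl
    rw [hc, Tm_add, Qm_add, smul_add]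
  map_smul' c x := by
    have hc : ((c • x : spLie m) : Matrix (ι m) (ι m) ℂ)
        = c • (x : Matrix (ι m) (ι m) ℂ) := rfl
    rw [hc, Tm_smul, Qm_smul, RingHom.id_apply, smul_comm]

def tauHom (n m : ℕ) : spLie m →ₗ⁅ℂ⁆ Module.End ℂ (WP n m) :=
  { tauLin n m with
    map_lie' := by
      intro x y
      show (2⁻¹ : ℂ) • Qm (Tm ((⁅x, y⁆ : spLie m) : Matrix (ι m) (ι m) ℂ))
          = ⁅(2⁻¹ : ℂ) • Qm (n := n) (Tm (x : Matrix (ι m) (ι m) ℂ)),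
             (2⁻¹ : ℂ) • Qm (n := n) (Tm (y : Matrix (ι m) (ι m) ℂ))⁆
      have hc : ((⁅x, y⁆ : spLie m) : Matrix (ι m) (ι m) ℂ)
          = (x : Matrix (ι m) (ι m) ℂ) * y - (y : Matrix (ι m) (ι m) ℂ) * x := rfl
      rw [hc, smul_lie'', lie_smul'', smul_smul,
        lieQ (Tm (x : Matrix (ι m) (ι m) ℂ)) (Tm (y : Matrix (ι m) (ι m) ℂ))
          (T_symm x.2) (T_symm y.2),
        TΩT, TΩT, Tm_sub, smul_smul]
      norm_num }

end Stmt4Aux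


open Stmt4Aux

/-- The map `τ' : 𝔰𝔭_{2m} → D(V)` determined by `e_{j,k+m} + e_{k,j+m} ↦ M_{j,k}`,
`-e_{j+m,k} - e_{k+m,j} ↦ Δ_{j,k}`, `e_{j,k} - e_{m+k,m+j} ↦ E_{j,k} + (n/2)δ_{j,k}`
is a Lie algebra homomorphism. -/
theorem stmt4 (n m : ℕ) :
    ∃ τ' : spLie m →ₗ⁅ℂ⁆ Module.End ℂ (WP n m),
      ∀ (j k : Fin m) (ξ : spLie m),
        ((ξ : Matrix (Fin m ⊕ Fin m) (Fin m ⊕ Fin m) ℂ)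
            = Matrix.single (Sum.inl j) (Sum.inr k) 1 + Matrix.single (Sum.inl k) (Sum.inr j) 1
            → τ' ξ = Mop n m j k)
        ∧ ((ξ : Matrix (Fin m ⊕ Fin m) (Fin m ⊕ Fin m) ℂ)
            = -Matrix.single (Sum.inr j) (Sum.inl k) 1 - Matrix.single (Sum.inr k) (Sum.inl j) 1
            → τ' ξ = Δop n m j k)
        ∧ ((ξ : Matrix (Fin m ⊕ Fin m) (Fin m ⊕ Fin m) ℂ)
            = Matrix.single (Sum.inl j) (Sum.inl k) 1 - Matrix.single (Sum.inr k) (Sum.inr j) 1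
            → τ' ξ = Eop n m j k + (if j = k then ((n : ℂ) / 2) else 0) • 1) := by
  refine ⟨tauHom n m, fun j k ξ => ⟨?_, ?_, ?_⟩⟩
  · intro h
    show (2⁻¹ : ℂ) • Qm (Tm (ξ : Matrix (ι m) (ι m) ℂ)) = Mop n m j k
    rw [h, Tm_add, Tm_std, Tm_std]
    simp only [sg, Sum.elim_inl, Sum.swap_inr, one_smul]
    rw [Qm_add, Qm_std, Qm_std]
    have h1 : (∑ i : Fin n, pOp m i (Sum.inl j) * pOp m i (Sum.inl k)) = Mop n m j k := rfl
    have h2 : (∑ i : Fin n, pOp m i (Sum.inl k) * pOp m i (Sum.inl j)) = Mop n m j k :=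
      Finset.sum_congr rfl fun i _ => xops_comm i k j
    rw [h1, h2, ← two_smul ℂ, smul_smul]
    norm_num
  · intro h
    show (2⁻¹ : ℂ) • Qm (Tm (ξ : Matrix (ι m) (ι m) ℂ)) = Δop n m j k
    rw [h, Tm_sub, Tm_neg, Tm_std, Tm_std]
    simp only [sg, Sum.elim_inr, Sum.swap_inl, neg_smul, one_smul, neg_neg, sub_neg_eq_add]
    rw [Qm_add, Qm_std, Qm_std]
    have h1 : (∑ i : Fin n, pOp m i (Sum.inr j) * pOp m i (Sum.inr k)) = Δop n m j k := rfl
    have h2 : (∑ i : Fin n, pOp m i (Sum.inr k) * pOp m i (Sum.inr j)) = Δop n m j k :=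
      Finset.sum_congr rfl fun i _ => dops_comm i k j
    rw [h1, h2, ← two_smul ℂ, smul_smul]
    norm_num
  · intro h
    show (2⁻¹ : ℂ) • Qm (Tm (ξ : Matrix (ι m) (ι m) ℂ))
        = Eop n m j k + (if j = k then ((n : ℂ) / 2) else 0) • 1
    rw [h, Tm_sub, Tm_std, Tm_std]
    simp only [sg, Sum.elim_inl, Sum.elim_inr, Sum.swap_inl, Sum.swap_inr, one_smul,
      neg_smul, sub_neg_eq_add]
    rw [Qm_add, Qm_std, Qm_std]
    have h1 : (∑ i : Fin n, pOp m i (Sum.inl j) * pOp m i (Sum.inr k)) = Eop n m j k := rfl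
    have h2 : (∑ i : Fin n, pOp m i (Sum.inr k) * pOp m i (Sum.inl j))
        = Eop n m j k + (if j = k then ((n : ℂ)) else 0) • 1 := by
      have hstep : (∑ i : Fin n, pOp m i (Sum.inr k) * pOp m i (Sum.inl j))
          = ∑ i : Fin n, (xOp i j * dOp i k + (if j = k then (1:ℂ) else 0) • 1) :=
        Finset.sum_congr rfl fun i _ => dx_rel i j k
      rw [hstep, Finset.sum_add_distrib]
      have hconst : (∑ _i : Fin n, ((if j = k then (1:ℂ) else 0) • (1 : Module.End ℂ (WP n m))))
          = (if j = k then ((n : ℂ)) else 0) • 1 := by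
        rw [Finset.sum_const, Finset.card_univ, Fintype.card_fin, ← Nat.cast_smul_eq_nsmul ℂ,
          smul_smul]
        by_cases hjk : j = k <;> simp [hjk]
      rw [hconst]; rfl
    rw [h1, h2]
    by_cases hjk : j = k <;> simp only [hjk, if_true, if_false] <;> module


end
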